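/- arXiv:1908.09308 — 5 statements merged into one kernel-verified Lean document; each statement's English description precedes it below -/
import Mathlib

section
/- Let (X,S) be a semigroup right act and define x ≤_S y iff there exists s ∈ S with xs = y. Then ≤_S is a partial order on X if and only if the act is s-unital (for all x ∈ X there exists s ∈ S with xs = x) and acyclic (for all x ∈ X and s, s' ∈ S, x = x·(s·s') implies x = x·s). -/
/-- For a semigroup right act (X,S), the relation
`x ≤_S y ↔ ∃ s, x·s = y` is a partial order on X iff the act is
s-unital and acyclic. -/
theorem semigroup_act_partialOrder_iff
    (X S : Type) [Semigroup S] (act : X → S → X)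
    (hact : ∀ (x : X) (s s' : S), act (act x s) s' = act x (s * s')) :
    IsPartialOrder X (fun x y => ∃ s : S, act x s = y) ↔
      ((∀ x : X, ∃ s : S, act x s = x) ∧
        (∀ (x : X) (s s' : S), act x (s * s') = x → act x s = x)) := by
  constructor
  · intro h
    refine ⟨fun x => h.refl x, fun x s s' hx => ?_⟩
    exact (h.antisymm (act x s) x ⟨s', by rw [hact]; exact hx⟩ ⟨s, rfl⟩)
  · rintro ⟨hu, ha⟩
    refine { refl := fun x => hu x, trans := ?_, antisymm := ?_ }
    · rintro x y z ⟨s, rfl⟩ ⟨t, rfl⟩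
      exact ⟨s * t, (hact x s t).symm⟩
    · rintro x y ⟨s, rfl⟩ ⟨t, ht⟩
      have : act x (s * t) = x := by rw [← hact]; exact ht
      exact (ha x s t this).symm
end

section
/- A poset P is a full monoid poset (P ≅ P(M,M) for a monoid M) if and only if P is a semigroup poset (P ≅ P(T,S) for some semigroups S < T) having a global minimum. -/
/-- P is a full monoid poset: P ≅ P(M,M) for a monoid M,
ordered by s ≤ t iff ∃ m ∈ M, s·m = t. -/
def IsFullMonoidPoset (α : Type) [PartialOrder α] : Prop :=
  ∃ (M : Type) (mul : M → M → M) (one : M) (e : α ≃ M),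
    (∀ a b c : M, mul (mul a b) c = mul a (mul b c)) ∧
    (∀ a : M, mul one a = a) ∧ (∀ a : M, mul a one = a) ∧
    (∀ x y : α, x ≤ y ↔ ∃ m : M, mul (e x) m = e y)

/-- P is a semigroup poset: P ≅ P(T,S) for a semigroup T and subsemigroup S. -/
def IsSemigroupPoset (α : Type) [PartialOrder α] : Prop :=
  ∃ (T : Type) (mul : T → T → T) (S : Set T) (e : α ≃ T),
    (∀ a b c : T, mul (mul a b) c = mul a (mul b c)) ∧
    (∀ a ∈ S, ∀ b ∈ S, mul a b ∈ S) ∧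
    (∀ x y : α, x ≤ y ↔ ∃ s ∈ S, mul (e x) s = e y)

/-- A poset is a full monoid poset iff it is a semigroup poset
with a global minimum. -/
theorem isFullMonoidPoset_iff (α : Type) [PartialOrder α] :
    IsFullMonoidPoset α ↔ (IsSemigroupPoset α ∧ ∃ b : α, ∀ x : α, b ≤ x) := by
  constructor
  · rintro ⟨M, mul, one, e, hassoc, hone, hone', horder⟩
    constructor
    · exact ⟨M, mul, Set.univ, e, hassoc, fun a _ b _ => trivial, fun x y => by
        rw [horder]; simp⟩
    · refine ⟨e.symm one, fun x => ?_⟩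
      rw [horder]
      exact ⟨e x, by rw [e.apply_symm_apply, hone]⟩
  · rintro ⟨⟨T, mul, S, e, hassoc, hclosed, horder⟩, b, hb⟩
    set c : T := e b with hc
    -- Fact 1: every t is c * p for some p ∈ S
    have fact1 : ∀ t : T, ∃ p ∈ S, mul c p = t := by
      intro t
      have := (horder b (e.symm t)).mp (hb _)
      simpa using this
    -- antisymmetry transported to T
    have antisym : ∀ t u : T, (∃ s ∈ S, mul t s = u) → (∃ s ∈ S, mul u s = t) → t = u := by
      intro t u h1 h2
      have h1' : e.symm t ≤ e.symm u := by
        rw [horder]; simpa using h1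
      have h2' : e.symm u ≤ e.symm t := by
        rw [horder]; simpa using h2
      have := le_antisymm h1' h2'
      exact e.symm.injective this
    -- Claim B : c * c = c
    obtain ⟨p₀, hp₀S, hp₀⟩ := fact1 c
    obtain ⟨p₁, hp₁S, hp₁⟩ := fact1 p₀
    have hcc : mul c c = c := by
      apply antisym
      · exact ⟨p₁, hp₁S, by rw [hassoc, hp₁, hp₀]⟩
      · obtain ⟨q, hqS, hq⟩ := fact1 (mul c c)
        exact ⟨q, hqS, hq⟩
    -- Claim A : ∀ s ∈ S, c * s = s
    have claimA : ∀ s ∈ S, mul c s = s := by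
      intro s hs
      obtain ⟨p, hpS, hp⟩ := fact1 s
      rw [← hp, ← hassoc, hcc]
    -- every t ∈ T lies in S, and c * t = t
    have memS : ∀ t : T, t ∈ S := by
      intro t
      obtain ⟨p, hpS, hp⟩ := fact1 t
      rw [← hp, claimA p hpS]; exact hpS
    have left_id : ∀ t : T, mul c t = t := fun t => claimA t (memS t)
    -- right identity: t * c = t
    have right_id : ∀ t : T, mul t c = t := by
      intro t
      apply antisym
      · -- t * c ≤ ... need (mul t c) * s = t for some s ∈ S
        obtain ⟨w, hwS, hw⟩ := (horder (e.symm t) (e.symm t)).mp le_rfl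
        rw [e.apply_symm_apply] at hw
        refine ⟨w, hwS, ?_⟩
        rw [hassoc, claimA w hwS, hw]
      · exact ⟨c, memS c, rfl⟩
    refine ⟨T, mul, c, e, hassoc, left_id, right_id, fun x y => ?_⟩
    rw [horder]
    constructor
    · rintro ⟨s, _, hs⟩; exact ⟨s, hs⟩
    · rintro ⟨m, hm⟩; exact ⟨m, memS m, hm⟩
end

section
/- The poset on the set {0,2,3,4,5,6} ordered by a < b iff b − a ≥ 2 is not a semigroup poset: there exist no semigroups S < T with this poset isomorphic to P(T,S). (More generally this holds for the set {0,2,3,...,c} for any c ≥ 6.) -/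
abbrev Xc (c : ℕ) := {n : ℕ // n = 0 ∨ (2 ≤ n ∧ n ≤ c)}

theorem key_no_gap_monoid (c : ℕ) (hc : 6 ≤ c) (p : Xc c → Xc c → Xc c)
    (passoc : ∀ x y z, p (p x y) z = p x (p y z))
    (hLid : ∀ y, p ⟨0, Or.inl rfl⟩ y = y)
    (hRel : ∀ x y : Xc c, ((x : ℕ) = (y : ℕ) ∨ (x : ℕ) + 2 ≤ (y : ℕ)) ↔ ∃ a, p x a = y) :
    False := by
  set x0 : Xc c := ⟨0, Or.inl rfl⟩ with hx0def
  have hx0 : (x0 : ℕ) = 0 := rfl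
  have hX2 : ∀ x : Xc c, (x : ℕ) = 0 ∨ 2 ≤ (x : ℕ) := by
    intro x; rcases x.2 with h | h
    · exact Or.inl h
    · exact Or.inr h.1
  have hle : ∀ x : Xc c, (x : ℕ) ≤ c := by
    intro x; rcases x.2 with h | h <;> omega
  have hO : ∀ x a : Xc c, (x : ℕ) = (p x a : ℕ) ∨ (x : ℕ) + 2 ≤ (p x a : ℕ) :=
    fun x a => (hRel x (p x a)).mpr ⟨a, rfl⟩
  have hS : ∀ x y : Xc c, (x : ℕ) + 2 ≤ (y : ℕ) → ∃ a, p x a = y :=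
    fun x y h => (hRel x y).mp (Or.inr h)
  have hrefl : ∀ x : Xc c, ∃ a, p x a = x := fun x => (hRel x x).mp (Or.inl rfl)
  have hF : ∀ x z : Xc c, (∀ y, p x y = p z y) → x = z := by
    intro x z h
    obtain ⟨a, ha⟩ := hrefl x
    obtain ⟨b, hb⟩ := hrefl z
    have h1 : (z : ℕ) = (x : ℕ) ∨ (z : ℕ) + 2 ≤ (x : ℕ) :=
      (hRel z x).mpr ⟨a, by rw [← h, ha]⟩
    have h2 : (x : ℕ) = (z : ℕ) ∨ (x : ℕ) + 2 ≤ (z : ℕ) :=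
      (hRel x z).mpr ⟨b, by rw [h, hb]⟩
    exact Subtype.ext (by omega)
  have hRid : ∀ x, p x x0 = x := by
    intro x
    apply hF
    intro y
    rw [passoc, hLid]
  obtain ⟨n2, hn2⟩ : ∃ x : Xc c, (x : ℕ) = 2 := ⟨⟨2, by omega⟩, rfl⟩
  obtain ⟨n3, hn3⟩ : ∃ x : Xc c, (x : ℕ) = 3 := ⟨⟨3, by omega⟩, rfl⟩
  obtain ⟨n4, hn4⟩ : ∃ x : Xc c, (x : ℕ) = 4 := ⟨⟨4, by omega⟩, rfl⟩
  obtain ⟨n5, hn5⟩ : ∃ x : Xc c, (x : ℕ) = 5 := ⟨⟨5, by omega⟩, rfl⟩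
  obtain ⟨n6, hn6⟩ : ∃ x : Xc c, (x : ℕ) = 6 := ⟨⟨6, by omega⟩, rfl⟩
  -- Step A : preimage of 4 under left mult by 2
  have hA : (p n2 n2 : ℕ) = 2 ∨ (p n2 n2 : ℕ) = 4 ∨ (p n2 n3 : ℕ) = 4 := by
    obtain ⟨a, ha⟩ := hS n2 n4 (by omega)
    have hav := congrArg Subtype.val ha
    rcases hX2 a with h0 | h2
    · exfalso
      have hax : a = x0 := Subtype.ext (by omega)
      rw [hax, hRid] at ha
      have := congrArg Subtype.val ha
      omega
    · by_cases ha2 : (a : ℕ) = 2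
      · have : a = n2 := Subtype.ext (by omega)
        rw [this] at ha
        have := congrArg Subtype.val ha
        omega
      · by_cases ha3 : (a : ℕ) = 3
        · have : a = n3 := Subtype.ext (by omega)
          rw [this] at ha
          have := congrArg Subtype.val ha
          omega
        · obtain ⟨w, hw⟩ := hS n2 a (by omega)
          have e1 : p (p n2 n2) w = n4 := by rw [passoc, hw, ha]
          have h6 := hO (p n2 n2) w
          rw [e1] at h6
          have h7 := hO n2 n2
          omega
  -- Step B : preimage of 5 under left mult by 2
  have hB : (p n2 n2 : ℕ) = 2 ∨ (p n2 n2 : ℕ) = 5 ∨ (p n2 n3 : ℕ) = 5 := by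
    obtain ⟨a, ha⟩ := hS n2 n5 (by omega)
    have hav := congrArg Subtype.val ha
    rcases hX2 a with h0 | h2
    · exfalso
      have hax : a = x0 := Subtype.ext (by omega)
      rw [hax, hRid] at ha
      have := congrArg Subtype.val ha
      omega
    · by_cases ha2 : (a : ℕ) = 2
      · have : a = n2 := Subtype.ext (by omega)
        rw [this] at ha
        have := congrArg Subtype.val ha
        omega
      · by_cases ha3 : (a : ℕ) = 3
        · have : a = n3 := Subtype.ext (by omega)
          rw [this] at ha
          have := congrArg Subtype.val ha
          omega
        · obtain ⟨w, hw⟩ := hS n2 a (by omega)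
          have e1 : p (p n2 n2) w = n5 := by rw [passoc, hw, ha]
          have h6 := hO (p n2 n2) w
          rw [e1] at h6
          have h7 := hO n2 n2
          omega
  by_cases hk2 : (p n2 n2 : ℕ) = 2
  · -- Case C1 : 2*2 = 2
    have hk2el : p n2 n2 = n2 := Subtype.ext (by omega)
    have hu : ∀ b : Xc c, 4 ≤ (b : ℕ) → p n2 b = b := by
      intro b hb
      obtain ⟨w, hw⟩ := hS n2 b (by omega)
      rw [← hw, ← passoc, hk2el, hw]
    by_cases hq4 : 4 ≤ (p n2 n3 : ℕ)
    · obtain ⟨w5, hw5⟩ := hS n3 n5 (by omega)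
      have e1 : p (p n2 n3) w5 = n5 := by
        rw [passoc, hw5]; exact hu n5 (by omega)
      have h1 := hO (p n2 n3) w5
      rw [e1] at h1
      obtain ⟨w6, hw6⟩ := hS n3 n6 (by omega)
      have e2 : p (p n2 n3) w6 = n6 := by
        rw [passoc, hw6]; exact hu n6 (by omega)
      have h2 := hO (p n2 n3) w6
      rw [e2] at h2
      omega
    · have hq2 : (p n2 n3 : ℕ) = 2 := by
        have := hO n2 n3; omega
      have hq2el : p n2 n3 = n2 := Subtype.ext (by omega)
      have hz := hO n3 n4
      have e3 : p n2 (p n3 n4) = p n2 n4 := by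
        rw [← passoc, hq2el]
      have e4 : p n2 n4 = n4 := hu n4 (by omega)
      rcases hz with h3 | h5
      · have hzel : p n3 n4 = n3 := Subtype.ext (by omega)
        rw [hzel, hq2el] at e3
        have := congrArg Subtype.val e3
        have := congrArg Subtype.val e4
        omega
      · have : p n2 (p n3 n4) = p n3 n4 := hu _ (by omega)
        rw [this, e4] at e3
        have := congrArg Subtype.val e3
        omega
  · by_cases hk4 : (p n2 n2 : ℕ) = 4
    · -- Case C2 : 2*2 = 4, and then 2*3 = 5
      have hq5 : (p n2 n3 : ℕ) = 5 := by omega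
      -- the forced form of left multiplication by 2
      have htau : ∀ b : ℕ, 2 ≤ b → b + 2 ≤ c → ∀ a : Xc c, (a : ℕ) = b →
          (p n2 a : ℕ) = b + 2 := by
        intro b
        induction b using Nat.strong_induction_on with
        | _ b IH =>
          intro hb2 hbc a hab
          by_cases hblt : b < 4
          · by_cases hb2' : b = 2
            · have : a = n2 := Subtype.ext (by omega)
              rw [this]; omega
            · have hb3 : b = 3 := by omega
              have : a = n3 := Subtype.ext (by omega)
              rw [this]; omega
          · obtain ⟨t, ht⟩ : ∃ x : Xc c, (x : ℕ) = b + 2 := ⟨⟨b + 2, by omega⟩, rfl⟩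
            obtain ⟨w, hw⟩ := hS n2 t (by omega)
            have hwv := congrArg Subtype.val hw
            rcases hX2 w with h0 | h2
            · exfalso
              have hwx : w = x0 := Subtype.ext (by omega)
              rw [hwx, hRid] at hw
              have := congrArg Subtype.val hw
              omega
            · by_cases hwb : (w : ℕ) < b
              · exfalso
                have := IH (w : ℕ) hwb h2 (by omega) w rfl
                omega
              · by_cases hweq : (w : ℕ) = b
                · have : w = a := Subtype.ext (by omega)
                  rw [this] at hw
                  have := congrArg Subtype.val hw
                  omega
                · exfalso
                  obtain ⟨eb1, heb1⟩ : ∃ x : Xc c, (x : ℕ) = b - 1 := ⟨⟨b - 1, by omega⟩, rfl⟩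
                  obtain ⟨w2, hw2⟩ := hS eb1 w (by omega)
                  have hv : (p n2 eb1 : ℕ) = (b - 1) + 2 :=
                    IH (b - 1) (by omega) (by omega) (by omega) eb1 heb1
                  have e5 : p (p n2 eb1) w2 = t := by rw [passoc, hw2, hw]
                  have h6 := hO (p n2 eb1) w2
                  rw [e5] at h6
                  omega
      -- 2 fixes c-1 and c
      have h2c1 : ∀ y : Xc c, (y : ℕ) = c - 1 → (p n2 y : ℕ) = c - 1 := by
        intro y hy
        obtain ⟨e3, he3⟩ : ∃ x : Xc c, (x : ℕ) = c - 3 := ⟨⟨c - 3, by omega⟩, rfl⟩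
        have hv := htau (c - 3) (by omega) (by omega) e3 he3
        obtain ⟨w, hw⟩ := hS e3 y (by omega)
        have heq : p n2 e3 = y := Subtype.ext (by omega)
        have e5 : p n2 y = p y w := by
          conv_lhs => rw [← hw]
          rw [← passoc, heq]
        have h6 := hO y w
        rw [← e5] at h6
        have := hle (p n2 y)
        omega
      have h2c : ∀ y : Xc c, (y : ℕ) = c → (p n2 y : ℕ) = c := by
        intro y hy
        obtain ⟨e2, he2⟩ : ∃ x : Xc c, (x : ℕ) = c - 2 := ⟨⟨c - 2, by omega⟩, rfl⟩
        have hv := htau (c - 2) (by omega) (by omega) e2 he2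
        obtain ⟨w, hw⟩ := hS e2 y (by omega)
        have heq : p n2 e2 = y := Subtype.ext (by omega)
        have e5 : p n2 y = p y w := by
          conv_lhs => rw [← hw]
          rw [← passoc, heq]
        have h6 := hO y w
        rw [← e5] at h6
        have := hle (p n2 y)
        omega
      -- parity lemma for left multiplication by 2
      have hPL : ∀ y : Xc c, (p n2 y : ℕ) % 2 = (y : ℕ) % 2 := by
        intro y
        rcases hX2 y with h0 | h2
        · have : y = x0 := Subtype.ext (by omega)
          rw [this, hRid]
          omega
        · have hyc := hle y
          by_cases hA1 : (y : ℕ) + 2 ≤ c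
          · have := htau (y : ℕ) h2 hA1 y rfl
            omega
          · by_cases hA2 : (y : ℕ) = c - 1
            · have := h2c1 y hA2; omega
            · have hyc' : (y : ℕ) = c := by omega
              have := h2c y hyc'; omega
      -- row c is constant c
      have hrowc : ∀ (y : Xc c) (a : Xc c), (y : ℕ) = c → (p y a : ℕ) = c := by
        intro y a hy
        have h1 := hO y a
        have h2 := hle (p y a)
        omega
      -- parity of row m reduces to row 2 or row 3 depending on parity of m
      have hpar : ∀ n : ℕ, 2 ≤ n → ∀ m : Xc c, (m : ℕ) = n → ∀ y,
          (p m y : ℕ) % 2 = (p (if n % 2 = 0 then n2 else n3) y : ℕ) % 2 := by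
        intro n
        induction n using Nat.strong_induction_on with
        | _ n IH =>
          intro hn m hm y
          by_cases hn4 : n < 4
          · by_cases hn2' : n = 2
            · have : m = n2 := Subtype.ext (by omega)
              rw [this, if_pos (by omega)]
            · have hn3' : n = 3 := by omega
              have : m = n3 := Subtype.ext (by omega)
              rw [this, if_neg (by omega)]
          · obtain ⟨z, hz⟩ : ∃ x : Xc c, (x : ℕ) = n - 2 := ⟨⟨n - 2, by omega⟩, rfl⟩
            have hmc := hle m
            have hm2 : p n2 z = m := by
              apply Subtype.ext
              have := htau (n - 2) (by omega) (by omega) z hz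
              omega
            have e5 : p m y = p n2 (p z y) := by rw [← hm2, passoc]
            have h1 : (p m y : ℕ) % 2 = (p z y : ℕ) % 2 := by
              rw [e5, hPL]
            have h2 := IH (n - 2) (by omega) (by omega) z hz y
            by_cases he : n % 2 = 0
            · rw [if_pos he]
              rw [if_pos (by omega : (n - 2) % 2 = 0)] at h2
              omega
            · rw [if_neg he]
              rw [if_neg (by omega : ¬(n - 2) % 2 = 0)] at h2
              omega
      obtain ⟨ec, hec⟩ : ∃ x : Xc c, (x : ℕ) = c := ⟨⟨c, by omega⟩, rfl⟩
      -- c must be odd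
      have hcodd : c % 2 = 1 := by
        by_contra hcon
        have hc0 : c % 2 = 0 := by omega
        have h1 := hpar c (by omega) ec hec n3
        rw [if_pos hc0] at h1
        have h2 := hrowc ec n3 hec
        omega
      -- 3*2 and 3*3 are odd
      have hd : (p n3 n2 : ℕ) % 2 = 1 := by
        have h1 := hpar c (by omega) ec hec n2
        rw [if_neg (by omega)] at h1
        have h2 := hrowc ec n2 hec
        omega
      have hs : (p n3 n3 : ℕ) % 2 = 1 := by
        have h1 := hpar c (by omega) ec hec n3
        rw [if_neg (by omega)] at h1
        have h2 := hrowc ec n3 hec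
        omega
      -- all values in row 3 are odd
      have hrow3 : ∀ (n : ℕ) (a : Xc c), (a : ℕ) = n → (p n3 a : ℕ) % 2 = 1 := by
        intro n
        induction n using Nat.strong_induction_on with
        | _ n IH =>
          intro a ha
          have hna := hX2 a
          by_cases hn4 : n < 4
          · have hcases : n = 0 ∨ n = 2 ∨ n = 3 := by omega
            rcases hcases with h | h | h
            · have : a = x0 := Subtype.ext (by omega)
              rw [this, hRid]
              omega
            · have : a = n2 := Subtype.ext (by omega)
              rw [this]; exact hd
            · have : a = n3 := Subtype.ext (by omega)
              rw [this]; exact hs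
          · obtain ⟨z, hz⟩ : ∃ x : Xc c, (x : ℕ) = n - 2 := ⟨⟨n - 2, by omega⟩, rfl⟩
            have hac := hle a
            have hm2 : p n2 z = a := by
              apply Subtype.ext
              have := htau (n - 2) (by omega) (by omega) z hz
              omega
            have hstep : p n3 a = p (p n3 n2) z := by
              rw [← hm2, ← passoc]
            have hD2 : 2 ≤ (p n3 n2 : ℕ) := by
              rcases hX2 (p n3 n2) with h | h <;> omega
            have h1 := hpar (p n3 n2 : ℕ) hD2 (p n3 n2) rfl z
            rw [if_neg (by omega)] at h1
            have hIH := IH (n - 2) (by omega) z hz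
            rw [hstep]
            omega
      obtain ⟨a, ha⟩ := hS n3 n6 (by omega)
      have h1 := hrow3 (a : ℕ) a rfl
      have h2 := congrArg Subtype.val ha
      omega
    · -- Case C3 : 2*2 = 5, 2*3 = 4
      have hk5 : (p n2 n2 : ℕ) = 5 := by omega
      have hq4 : (p n2 n3 : ℕ) = 4 := by omega
      obtain ⟨a, ha⟩ := hS n2 n6 (by omega)
      have hav := congrArg Subtype.val ha
      rcases hX2 a with h0 | h2
      · have hax : a = x0 := Subtype.ext (by omega)
        rw [hax, hRid] at ha
        have := congrArg Subtype.val ha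
        omega
      · by_cases ha2 : (a : ℕ) = 2
        · have : a = n2 := Subtype.ext (by omega)
          rw [this] at ha
          have := congrArg Subtype.val ha
          omega
        · by_cases ha3 : (a : ℕ) = 3
          · have : a = n3 := Subtype.ext (by omega)
            rw [this] at ha
            have := congrArg Subtype.val ha
            omega
          · obtain ⟨w, hw⟩ := hS n2 a (by omega)
            have e1 : p (p n2 n2) w = n6 := by rw [passoc, hw, ha]
            have h6 := hO (p n2 n2) w
            rw [e1] at h6
            omega

/-- For every c ≥ 6, the poset on {0, 2, 3, …, c} ordered by
a ≤ b iff a = b or b - a ≥ 2 is not a semigroup poset: there are no semigroups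
S < T with this poset isomorphic to P(T,S). In particular this holds for
{0,2,3,4,5,6}. -/
theorem gap_order_on_star_interval_not_semigroup_poset (c : ℕ) (hc : 6 ≤ c) :
    ¬ ∃ (T : Type) (mul : T → T → T) (S : Set T)
        (e : {n : ℕ // n = 0 ∨ (2 ≤ n ∧ n ≤ c)} ≃ T),
        (∀ a b d : T, mul (mul a b) d = mul a (mul b d)) ∧
        (∀ a ∈ S, ∀ b ∈ S, mul a b ∈ S) ∧
        (∀ x y : {n : ℕ // n = 0 ∨ (2 ≤ n ∧ n ≤ c)},
          ((x : ℕ) = (y : ℕ) ∨ (x : ℕ) + 2 ≤ (y : ℕ)) ↔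
            ∃ s ∈ S, mul (e x) s = e y) := by
  rintro ⟨T, mul, S, e, hassoc, hSclosed, hiff⟩
  haveI : Fintype (Xc c) :=
    Fintype.subtype (insert 0 (Finset.Icc 2 c))
      (by intro n; simp [Finset.mem_insert, Finset.mem_Icc])
  set x0 : Xc c := ⟨0, Or.inl rfl⟩ with hx0def
  have h0 : ∀ y : Xc c, ∃ s ∈ S, mul (e x0) s = e y := by
    intro y
    apply (hiff x0 y).mp
    show (0 : ℕ) = (y : ℕ) ∨ 0 + 2 ≤ (y : ℕ)
    rcases y.2 with h | h
    · exact Or.inl h.symm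
    · right; omega
  choose F hFS hF using h0
  have hGinj : Function.Injective fun y : Xc c => e.symm (F y) := by
    intro y y' h
    have h2 : F y = F y' := e.symm.injective h
    have h3 : e y = e y' := by rw [← hF y, ← hF y', h2]
    exact e.injective h3
  have hGsurj := Finite.injective_iff_surjective.mp hGinj
  have hSuniv : ∀ t : T, t ∈ S := by
    intro t
    obtain ⟨y, hy⟩ := hGsurj (e.symm t)
    have h2 : F y = t := e.symm.injective hy
    exact h2 ▸ hFS y
  have hHsurj : Function.Surjective fun a : Xc c => e.symm (mul (e x0) (e a)) := by
    intro y
    refine ⟨e.symm (F y), ?_⟩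
    show e.symm (mul (e x0) (e (e.symm (F y)))) = y
    rw [Equiv.apply_symm_apply, hF y, Equiv.symm_apply_apply]
  have hHinj := Finite.injective_iff_surjective.mpr hHsurj
  obtain ⟨u, hu⟩ := hHsurj x0
  have hu' : mul (e x0) (e u) = e x0 := by
    have h2 := congrArg e hu
    simpa using h2
  have hLid0 : ∀ b : Xc c, mul (e u) (e b) = e b := by
    intro b
    have h1 : e.symm (mul (e x0) (e (e.symm (mul (e u) (e b))))) =
        e.symm (mul (e x0) (e b)) := by
      rw [Equiv.apply_symm_apply, ← hassoc, hu']
    have h2 := hHinj h1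
    have h3 := congrArg e h2
    simpa using h3
  obtain ⟨m2, hm2⟩ : ∃ x : Xc c, (x : ℕ) = 2 := ⟨⟨2, by omega⟩, rfl⟩
  obtain ⟨m3, hm3⟩ : ∃ x : Xc c, (x : ℕ) = 3 := ⟨⟨3, by omega⟩, rfl⟩
  have hu0 : u = x0 := by
    have h2 := (hiff u m2).mpr ⟨e m2, hSuniv _, hLid0 _⟩
    have h3 := (hiff u m3).mpr ⟨e m3, hSuniv _, hLid0 _⟩
    rcases u.2 with h | h
    · exact Subtype.ext h
    · exfalso; omega
  have hmul0 : ∀ b : Xc c, mul (e x0) (e b) = e b := by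
    intro b
    rw [← hu0]
    exact hLid0 b
  have passoc : ∀ x y z : Xc c,
      e.symm (mul (e (e.symm (mul (e x) (e y)))) (e z)) =
      e.symm (mul (e x) (e (e.symm (mul (e y) (e z))))) := by
    intro x y z
    rw [Equiv.apply_symm_apply, Equiv.apply_symm_apply, hassoc]
  have hLid : ∀ y : Xc c, e.symm (mul (e x0) (e y)) = y := by
    intro y
    rw [hmul0, Equiv.symm_apply_apply]
  have hRel : ∀ x y : Xc c, ((x : ℕ) = (y : ℕ) ∨ (x : ℕ) + 2 ≤ (y : ℕ)) ↔
      ∃ a : Xc c, e.symm (mul (e x) (e a)) = y := by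
    intro x y
    rw [hiff x y]
    constructor
    · rintro ⟨s, hs, hmul⟩
      exact ⟨e.symm s, by rw [Equiv.apply_symm_apply, hmul, Equiv.symm_apply_apply]⟩
    · rintro ⟨a, ha⟩
      refine ⟨e a, hSuniv _, ?_⟩
      have h2 := congrArg e ha
      simpa using h2
  exact key_no_gap_monoid c hc (fun x y => e.symm (mul (e x) (e y))) passoc hLid hRel
end

section
/- Let P ≅ P(T,S) be a semigroup poset and Q ≅ P(S',S') a full semigroup poset. Then the series composition P * Q (all elements of P below all elements of Q) is a semigroup poset, realized on T ∪ S' with mixed products tt' = t't = t' for t ∈ T, t' ∈ S'; moreover if P is full (resp. a monoid poset) then so is P * Q. -/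
/-- The mixed product on T ⊕ S' for the series composition: products within T
and S' are unchanged; for t ∈ T, t' ∈ S' one has tt' = t't = t'. -/
def serMul {T S' : Type} (mul : T → T → T) (mul' : S' → S' → S') :
    T ⊕ S' → T ⊕ S' → T ⊕ S'
  | Sum.inl a, Sum.inl b => Sum.inl (mul a b)
  | Sum.inl _, Sum.inr b => Sum.inr b
  | Sum.inr a, Sum.inl _ => Sum.inr a
  | Sum.inr a, Sum.inr b => Sum.inr (mul' a b)

/-- If P ≅ P(T,S) is a semigroup poset and Q ≅ P(S',S') is a full
semigroup poset, then the series composition P * Q is the semigroup poset on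
T ⊕ S' with subsemigroup S ∪ S' and mixed products tt' = t't = t'; moreover if
P is full then so is P * Q, and if P is a monoid poset then so is P * Q. -/
theorem series_composition_semigroup_poset
    (T S' : Type) [Semigroup T] [Semigroup S']
    (S : Subsemigroup T)
    (hord : IsPartialOrder T (fun t u => ∃ s ∈ S, t * s = u))
    (hord' : IsPartialOrder S' (fun t u => ∃ s : S', t * s = u)) :
    (∀ a b c : T ⊕ S',
      serMul (· * ·) (· * ·) (serMul (· * ·) (· * ·) a b) c =
        serMul (· * ·) (· * ·) a (serMul (· * ·) (· * ·) b c)) ∧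
    (∀ a ∈ (Sum.inl '' (S : Set T) ∪ Set.range Sum.inr : Set (T ⊕ S')),
      ∀ b ∈ (Sum.inl '' (S : Set T) ∪ Set.range Sum.inr : Set (T ⊕ S')),
        serMul (· * ·) (· * ·) a b ∈
          (Sum.inl '' (S : Set T) ∪ Set.range Sum.inr : Set (T ⊕ S'))) ∧
    (∀ x y : T ⊕ S',
      (∃ s ∈ (Sum.inl '' (S : Set T) ∪ Set.range Sum.inr : Set (T ⊕ S')),
          serMul (· * ·) (· * ·) x s = y) ↔
        ((∃ a b : T, x = Sum.inl a ∧ y = Sum.inl b ∧ ∃ s ∈ S, a * s = b) ∨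
         (∃ a b : S', x = Sum.inr a ∧ y = Sum.inr b ∧ ∃ s : S', a * s = b) ∨
         (∃ (a : T) (b : S'), x = Sum.inl a ∧ y = Sum.inr b))) ∧
    ((S : Set T) = Set.univ →
      (Sum.inl '' (S : Set T) ∪ Set.range Sum.inr : Set (T ⊕ S')) = Set.univ) ∧
    ((∃ e : T, e ∈ S ∧ ∀ t : T, e * t = t ∧ t * e = t) →
      ∃ E : T ⊕ S',
        E ∈ (Sum.inl '' (S : Set T) ∪ Set.range Sum.inr : Set (T ⊕ S')) ∧
        ∀ x : T ⊕ S',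
          serMul (· * ·) (· * ·) E x = x ∧ serMul (· * ·) (· * ·) x E = x) := by
  refine ⟨?_, ?_, ?_, ?_, ?_⟩
  · rintro (a|a) (b|b) (c|c) <;> simp [serMul, mul_assoc]
  · rintro a (⟨s,hs,rfl⟩|⟨s,rfl⟩) b (⟨u,hu,rfl⟩|⟨u,rfl⟩)
    · exact Or.inl ⟨s*u, S.mul_mem hs hu, rfl⟩
    · exact Or.inr ⟨u, rfl⟩
    · exact Or.inr ⟨s, rfl⟩
    · exact Or.inr ⟨s*u, rfl⟩
  · rintro (a|a) (b|b)
    · constructor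
      · rintro ⟨s,(⟨u,hu,rfl⟩|⟨u,rfl⟩),h⟩
        · exact Or.inl ⟨a, b, rfl, rfl, u, hu, Sum.inl.inj h⟩
        · exact absurd h (by simp [serMul])
      · rintro (⟨x,y,hx,hy,u,hu,h⟩|⟨x,y,hx,hy,_⟩|⟨x,y,hx,hy⟩) <;>
          try (simp at hx; done)
        all_goals try (simp at hy; done)
        cases hx; cases hy; exact ⟨Sum.inl u, Or.inl ⟨u, hu, rfl⟩, by simp [serMul, h]⟩
    · constructor
      · rintro _
        exact Or.inr (Or.inr ⟨a, b, rfl, rfl⟩)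
      · rintro _
        exact ⟨Sum.inr b, Or.inr ⟨b, rfl⟩, rfl⟩
    · constructor
      · rintro ⟨s,(⟨u,hu,rfl⟩|⟨u,rfl⟩),h⟩ <;> exact absurd h (by simp [serMul])
      · rintro (⟨x,y,hx,hy,_⟩|⟨x,y,hx,hy,_⟩|⟨x,y,hx,hy⟩) <;>
          first | (simp at hx; done) | (simp at hy; done)
    · constructor
      · rintro ⟨s,(⟨u,hu,rfl⟩|⟨u,rfl⟩),h⟩
        · cases Sum.inr.inj h
          exact Or.inr (Or.inl ⟨a, a, rfl, rfl, hord'.refl a⟩)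
        · exact Or.inr (Or.inl ⟨a, b, rfl, rfl, u, Sum.inr.inj h⟩)
      · rintro (⟨x,y,hx,hy,_⟩|⟨x,y,hx,hy,u,h⟩|⟨x,y,hx,hy⟩) <;>
          try (simp at hx; done)
        all_goals try (simp at hy; done)
        cases hx; cases hy; exact ⟨Sum.inr u, Or.inr ⟨u, rfl⟩, by simp [serMul, h]⟩
  · intro h
    ext (a|a) <;> simp [h]
  · rintro ⟨e, he, hlr⟩
    refine ⟨Sum.inl e, Or.inl ⟨e, he, rfl⟩, ?_⟩
    rintro (a|a)
    · simp [serMul, (hlr a).1, (hlr a).2]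
    · simp [serMul]
end

section
/- Let M be a submonoid of an abelian group, finitely generated and pointed (M ∩ M⁻¹ = {0}). Then the Cayley poset P(M,M), i.e. M ordered by s ≤ t iff t − s ∈ M, is a partial order that is locally finite (every interval [s,t] is finite), has a finite number of atoms (which form the unique minimal generating set of M), and is auto-equivalent via the translations φ_s(x) = s + x. -/
/-- The Cayley order of P(M,M) for a submonoid M of an abelian group G:
s ≤ t iff t - s ∈ M. -/
def cayleyLE {G : Type} [AddCommGroup G] (M : AddSubmonoid G)
    (s t : ↥M) : Prop := (t : G) - (s : G) ∈ M

/-- Key combinatorial lemma: good generating set + finiteness of down-sets. -/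
theorem cayley_aux {G : Type} [AddCommGroup G] (M : AddSubmonoid G)
    (hfg : M.FG) (hpointed : ∀ x ∈ M, -x ∈ M → x = 0) :
    (∀ g : G, {m : G | m ∈ M ∧ g - m ∈ M}.Finite) ∧
    (∃ A : Finset G, (↑A : Set G) ⊆ (M : Set G) ∧ (0 : G) ∉ A ∧
      ∀ m ∈ M, m ≠ 0 → ∃ a ∈ A, m - a ∈ M) := by
  classical
  obtain ⟨S, hS⟩ := hfg
  set A : Finset G := S.erase 0 with hA
  have hclA : AddSubmonoid.closure (A : Set G) = M := by
    rw [← hS]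
    apply le_antisymm
    · exact AddSubmonoid.closure_mono (by simp [hA, Finset.coe_subset, Finset.erase_subset])
    · rw [AddSubmonoid.closure_le]
      intro x hx
      by_cases hx0 : x = 0
      · subst hx0; exact zero_mem _
      · exact AddSubmonoid.subset_closure (by simp [hA, Finset.mem_erase, hx0, hx])
  have h0A : (0 : G) ∉ A := by simp [hA]
  have hAM : ∀ a : G, a ∈ A → a ∈ M := by
    intro a ha
    rw [← hclA]; exact AddSubmonoid.subset_closure ha
  set e : (↥A → ℕ) → G := fun v => ∑ i : ↥A, v i • (i : G) with he
  have e_add : ∀ v w, e (v + w) = e v + e w := by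
    intro v w
    simp [he, add_nsmul, Finset.sum_add_distrib]
  have e_mem : ∀ v, e v ∈ M := by
    intro v
    exact AddSubmonoid.sum_mem M fun i _ => AddSubmonoid.nsmul_mem M (hAM _ i.2) _
  have e_surj : ∀ m ∈ M, ∃ v, e v = m := by
    intro m hm
    rw [← hclA] at hm
    induction hm using AddSubmonoid.closure_induction with
    | mem x hx => exact ⟨Pi.single (⟨x, hx⟩ : ↥A) 1, by
        simp [he, Pi.single_apply]⟩
    | zero => exact ⟨0, by simp [he]⟩
    | add x y _ _ hx hy =>
        obtain ⟨v, hv⟩ := hx; obtain ⟨w, hw⟩ := hy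
        exact ⟨v + w, by rw [e_add, hv, hw]⟩
  -- splitting off one generator
  have e_split : ∀ (v : ↥A → ℕ) (i : ↥A), v i ≠ 0 → ∃ c ∈ M, e v = (i : G) + c := by
    intro v i hi
    have hv : v = Pi.single i 1 + (v - Pi.single i 1) := by
      funext j
      by_cases hji : j = i
      · subst hji; simp [Pi.single_apply, Nat.add_sub_cancel' (Nat.one_le_iff_ne_zero.mpr hi)]
      · simp [Pi.single_apply, hji]
    have hsingle : e (Pi.single i 1) = (i : G) := by simp [he, Pi.single_apply]
    refine ⟨e (v - Pi.single i 1), e_mem _, ?_⟩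
    conv_lhs => rw [hv]
    rw [e_add, hsingle]
  have e_zero : ∀ v, e v = 0 → v = 0 := by
    intro v hv
    by_contra h
    obtain ⟨i, hi⟩ := Function.ne_iff.mp h
    obtain ⟨c, hc, hec⟩ := e_split v i hi
    have : -(i : G) = c := neg_eq_of_add_eq_zero_right (hec.symm.trans hv)
    have hi0 : (i : G) = 0 := hpointed _ (hAM _ i.2) (this ▸ hc)
    exact h0A (hi0 ▸ i.2)
  constructor
  · -- finiteness of intervals
    intro g
    have fiber_fin : (e ⁻¹' {g}).Finite := by
      have hanti : IsAntichain (· ≤ ·) (e ⁻¹' {g}) := by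
        intro v hv w hw hne hle
        apply hne
        have hw' : w = v + (w - v) := by
          funext j; exact (Nat.add_sub_cancel' (hle j)).symm
        have h1 : e v + e (w - v) = e v := by
          rw [← e_add, ← hw']; exact hw.trans hv.symm
        have hwv := e_zero _ (add_eq_left.mp h1)
        rw [hw', hwv, add_zero]
      exact hanti.finite_of_partiallyWellOrderedOn
          (Set.isPWO_of_wellQuasiOrderedLE (e ⁻¹' {g}))
    have D_fin : {v : ↥A → ℕ | g - e v ∈ M}.Finite := by
      apply Set.Finite.subset (fiber_fin.biUnion (fun c _ => Set.finite_Iic c))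
      intro v hv
      obtain ⟨w, hw⟩ := e_surj _ hv
      exact Set.mem_biUnion (show v + w ∈ e ⁻¹' {g} from by
        simp [Set.mem_preimage, e_add, hw]) (Set.mem_Iic.mpr le_self_add)
    apply Set.Finite.subset (D_fin.image e)
    rintro m ⟨hm, hgm⟩
    obtain ⟨v, hv⟩ := e_surj m hm
    exact ⟨v, by rwa [Set.mem_setOf_eq, hv], hv⟩
  · -- domination
    refine ⟨A, fun a ha => hAM a ha, h0A, ?_⟩
    intro m hm hm0
    obtain ⟨v, hv⟩ := e_surj m hm
    have hvne : v ≠ 0 := fun h => hm0 (by rw [← hv, h]; simp [he])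
    obtain ⟨i, hi⟩ := Function.ne_iff.mp hvne
    obtain ⟨c, hc, hec⟩ := e_split v i (by simpa using hi)
    refine ⟨(i : G), i.2, ?_⟩
    rw [← hv, hec]; simpa using hc

/-- For a finitely generated pointed submonoid M of an abelian
group, the Cayley poset P(M,M) (ordered by s ≤ t iff t - s ∈ M) is a partial
order with global minimum 0, is locally finite, has finitely many atoms which
generate M, and is auto-equivalent via the translations x ↦ s + x. -/
theorem fg_pointed_submonoid_cayley_poset
    (G : Type) [AddCommGroup G] (M : AddSubmonoid G)
    (hfg : M.FG) (hpointed : ∀ x ∈ M, -x ∈ M → x = 0) :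
    -- partial order
    IsPartialOrder ↥M (cayleyLE M) ∧
    -- global minimum
    (∀ x : ↥M, cayleyLE M 0 x) ∧
    -- locally finite
    (∀ s t : ↥M, {z : ↥M | cayleyLE M s z ∧ cayleyLE M z t}.Finite) ∧
    -- finitely many atoms, forming a generating set of M
    {a : ↥M | a ≠ 0 ∧ ∀ b : ↥M, b ≠ 0 → cayleyLE M b a → b = a}.Finite ∧
    AddSubmonoid.closure
      ((↑) '' {a : ↥M | a ≠ 0 ∧ ∀ b : ↥M, b ≠ 0 → cayleyLE M b a → b = a}) = M ∧
    -- auto-equivalent via the translations φ_s(x) = s + x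
    (∃ T : Set (↥M → ↥M),
      (∀ f ∈ T, ∀ x y : ↥M, cayleyLE M x y → cayleyLE M (f x) (f y)) ∧
      id ∈ T ∧
      (∀ f ∈ T, ∀ g ∈ T, f ∘ g ∈ T) ∧
      (∀ f ∈ T, ∀ g ∈ T, f ∘ g = g ∘ f) ∧
      (∀ x : ↥M, ∃! f : ↥M → ↥M, f ∈ T ∧
        Set.range f = {t : ↥M | cayleyLE M x t} ∧
        (∀ a b : ↥M, cayleyLE M (f a) (f b) ↔ cayleyLE M a b)) ∧
      T = {f : ↥M → ↥M | ∃ s : ↥M, f = fun x => s + x}) := by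
  classical
  obtain ⟨hfin, A, hAM, h0A, hdom⟩ := cayley_aux M hfg hpointed
  have hrefl : ∀ x : ↥M, cayleyLE M x x := by
    intro x; simpa [cayleyLE, sub_self] using zero_mem M
  have htrans : ∀ x y z : ↥M, cayleyLE M x y → cayleyLE M y z → cayleyLE M x z := by
    intro x y z h1 h2
    show (z : G) - (x : G) ∈ M
    rw [← sub_add_sub_cancel (z : G) (y : G) (x : G)]
    exact add_mem h2 h1
  have hanti : ∀ x y : ↥M, cayleyLE M x y → cayleyLE M y x → x = y := by
    intro x y h1 h2
    exact Subtype.ext (sub_eq_zero.mp (hpointed _ h1 (by rw [neg_sub]; exact h2))).symm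
  have hmin : ∀ x : ↥M, cayleyLE M 0 x := by
    intro x; simpa [cayleyLE] using x.2
  have hloc : ∀ s t : ↥M, {z : ↥M | cayleyLE M s z ∧ cayleyLE M z t}.Finite := by
    intro s t
    apply Set.Finite.of_finite_image (f := fun z : ↥M => (z : G) - (s : G))
    · apply (hfin ((t : G) - (s : G))).subset
      rintro _ ⟨z, ⟨h1, h2⟩, rfl⟩
      exact ⟨h1, by rw [sub_sub_sub_cancel_right]; exact h2⟩
    · intro z _ w _ h
      exact Subtype.ext (sub_left_inj.mp h)
  set Atoms := {a : ↥M | a ≠ 0 ∧ ∀ b : ↥M, b ≠ 0 → cayleyLE M b a → b = a} with hAtoms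
  have hdownfin : ∀ x : ↥M, {z : ↥M | cayleyLE M z x}.Finite := by
    intro x
    apply (hloc 0 x).subset
    intro z hz
    exact ⟨hmin z, hz⟩
  have hAtomsFin : Atoms.Finite := by
    apply Set.Finite.subset
      (A.finite_toSet.preimage (f := fun a : ↥M => (a : G)) Subtype.coe_injective.injOn)
    rintro a ⟨ha0, hamin⟩
    obtain ⟨x, hxA, hxle⟩ := hdom (a : G) a.2 (fun h => ha0 (Subtype.ext h))
    have hb0 : (⟨x, hAM hxA⟩ : ↥M) ≠ 0 := by
      intro h
      have hx0 : x = 0 := by simpa using Subtype.ext_iff.mp h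
      exact h0A (hx0 ▸ hxA)
    have := hamin ⟨x, hAM hxA⟩ hb0 hxle
    simpa [Set.mem_preimage, ← this] using hxA
  have hclosure : AddSubmonoid.closure ((↑) '' Atoms) = M := by
    apply le_antisymm
    · rw [AddSubmonoid.closure_le]
      rintro _ ⟨a, _, rfl⟩
      exact a.2
    · have key : ∀ n : ℕ, ∀ m : ↥M, {z : ↥M | cayleyLE M z m}.ncard ≤ n →
          (m : G) ∈ AddSubmonoid.closure ((↑) '' Atoms) := by
        intro n
        induction n using Nat.strong_induction_on with
        | _ n ih =>
          intro m hcard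
          by_cases hm0 : m = 0
          · rw [hm0]; exact zero_mem _
          by_cases hatom : m ∈ Atoms
          · exact AddSubmonoid.subset_closure ⟨m, hatom, rfl⟩
          · rw [hAtoms, Set.mem_setOf_eq] at hatom
            push_neg at hatom
            obtain ⟨b, hb0, hble, hbne⟩ := hatom hm0
            set c : ↥M := ⟨(m : G) - (b : G), hble⟩ with hc
            have hmc : (m : G) = (b : G) + (c : G) := by simp [hc]
            have hcard_lt : ∀ b' : ↥M, cayleyLE M b' m → ¬ cayleyLE M m b' →
                {z : ↥M | cayleyLE M z b'}.ncard < {z : ↥M | cayleyLE M z m}.ncard := by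
              intro b' hb' hnm
              apply Set.ncard_lt_ncard _ (hdownfin m)
              constructor
              · intro z hz; exact htrans z b' m hz hb'
              · intro hss
                exact hnm (hss (hrefl m))
            have hcm : cayleyLE M c m := by
              show (m : G) - (c : G) ∈ M
              simpa [hc] using b.2
            have h1 : ¬ cayleyLE M m b := fun h => hbne (hanti b m hble h)
            have h2 : ¬ cayleyLE M m c := by
              intro h
              have hnb : -(b : G) ∈ M := by
                have h' : ((m : G) - (b : G)) - (m : G) ∈ M := h
                rwa [sub_sub_cancel_left] at h'
              exact hb0 (Subtype.ext (hpointed _ b.2 hnb))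
            have hblt := lt_of_lt_of_le (hcard_lt b hble h1) hcard
            have hclt := lt_of_lt_of_le (hcard_lt c hcm h2) hcard
            rw [hmc]
            exact add_mem (ih _ hblt b le_rfl) (ih _ hclt c le_rfl)
      intro m hm
      exact key {z : ↥M | cayleyLE M z ⟨m, hm⟩}.ncard ⟨m, hm⟩ le_rfl
  refine ⟨{ refl := hrefl, trans := htrans, antisymm := hanti }, hmin, hloc,
    hAtomsFin, hclosure, {f : ↥M → ↥M | ∃ s : ↥M, f = fun x => s + x}, ?_, ?_, ?_, ?_, ?_, rfl⟩
  · rintro f ⟨s, rfl⟩ x y hxy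
    show ((s + y : ↥M) : G) - ((s + x : ↥M) : G) ∈ M
    simpa [cayleyLE, add_sub_add_left_eq_sub] using hxy
  · exact ⟨0, by funext x; simp⟩
  · rintro f ⟨s, rfl⟩ g ⟨t, rfl⟩
    exact ⟨s + t, by funext x; simp [Function.comp, add_assoc]⟩
  · rintro f ⟨s, rfl⟩ g ⟨t, rfl⟩
    funext x
    simp [Function.comp, add_left_comm]
  · intro x
    have hrange : ∀ s : ↥M, Set.range (fun z : ↥M => s + z) = {t : ↥M | cayleyLE M s t} := by
      intro s
      ext t
      constructor
      · rintro ⟨a, rfl⟩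
        show ((s + a : ↥M) : G) - (s : G) ∈ M
        simpa using a.2
      · intro ht
        exact ⟨⟨(t : G) - (s : G), ht⟩, Subtype.ext (by simp)⟩
    refine ⟨fun z => x + z, ⟨⟨x, rfl⟩, hrange x, ?_⟩, ?_⟩
    · intro a b
      show (((x + b : ↥M) : G) - ((x + a : ↥M) : G) ∈ M) ↔ _
      simp [cayleyLE, add_sub_add_left_eq_sub]
    · rintro g ⟨⟨s, rfl⟩, hr, -⟩
      rw [hrange s] at hr
      have hsx : cayleyLE M x s := by
        have : s ∈ {t : ↥M | cayleyLE M x t} := by rw [← hr]; exact hrefl s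
        exact this
      have hxs : cayleyLE M s x := by
        have : x ∈ {t : ↥M | cayleyLE M s t} := by rw [hr]; exact hrefl x
        exact this
      rw [hanti s x hxs hsx]
end
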